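/- Let N be odd with k distinct prime factors, and choose x uniformly at random from the units modulo N. Let r = ord_N(x). Then the probability that r is even and x^{r/2} + 1 ≢ 0 (mod N) is at least 1 - 1/2^{k-1}. -/

import Mathlib

open Finset

set_option maxHeartbeats 1000000
section


section Counting

variable {G : Type*} [CommGroup G] [Fintype G] [DecidableEq G]

/-- fibers of a hom are at most the kernel size -/
lemma fiber_card_le (f : G →* G) (b : G) :
    (univ.filter fun a => f a = b).card ≤ (univ.filter fun a => f a = 1).card := by
  rcases (univ.filter fun a => f a = b).eq_empty_or_nonempty with h | ⟨a₀, ha₀⟩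
  · simp [h]
  · simp only [mem_filter, mem_univ, true_and] at ha₀
    apply Finset.card_le_card_of_injOn (fun a => a * a₀⁻¹)
    · intro a ha
      simp only [mem_coe, mem_filter, mem_univ, true_and] at *
      rw [map_mul, map_inv, ha, ha₀, mul_inv_cancel]
    · intro a _ b _ h
      exact mul_right_cancel h

lemma card_orderOf_two_pow (h2 : (univ.filter fun y : G => y ^ 2 = 1).card ≤ 2) (j : ℕ) :
    (univ.filter fun y : G => orderOf y = 2 ^ (j + 1)).card ≤ 2 ^ j := by
  induction j with
  | zero =>
    -- elements of order 2, together with 1, inject into {y^2 = 1}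
    have hsub : insert (1 : G) (univ.filter fun y : G => orderOf y = 2 ^ (0 + 1)) ⊆
        univ.filter fun y : G => y ^ 2 = 1 := by
      intro y hy
      simp only [mem_insert, mem_filter, mem_univ, true_and] at hy ⊢
      rcases hy with rfl | hy
      · simp
      · have h := pow_orderOf_eq_one y
        rw [hy] at h
        simpa using h
    have h1 : (1 : G) ∉ (univ.filter fun y : G => orderOf y = 2 ^ (0 + 1)) := by
      simp
    have := Finset.card_le_card hsub
    rw [Finset.card_insert_of_notMem h1] at this
    omega
  | succ j ih =>
    have key := Finset.card_le_mul_card_image (f := fun y : G => y ^ 2)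
      (univ.filter fun y : G => orderOf y = 2 ^ (j + 2)) 2 ?_
    · refine le_trans key ?_
      have himg : ((univ.filter fun y : G => orderOf y = 2 ^ (j + 2)).image fun y => y ^ 2) ⊆
          univ.filter fun y : G => orderOf y = 2 ^ (j + 1) := by
        intro z hz
        simp only [mem_image, mem_filter, mem_univ, true_and] at hz ⊢
        obtain ⟨y, hy, rfl⟩ := hz
        rw [orderOf_pow, hy]
        have : Nat.gcd (2 ^ (j + 2)) 2 = 2 := by
          rw [Nat.gcd_comm]
          exact Nat.gcd_eq_left (dvd_pow_self 2 (by omega))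
        rw [this, pow_succ, Nat.mul_div_cancel]
        omega
      calc 2 * ((univ.filter fun y : G => orderOf y = 2 ^ (j + 2)).image fun y => y ^ 2).card
          ≤ 2 * (univ.filter fun y : G => orderOf y = 2 ^ (j + 1)).card :=
            Nat.mul_le_mul_left _ (Finset.card_le_card himg)
        _ ≤ 2 * 2 ^ j := Nat.mul_le_mul_left _ ih
        _ = 2 ^ (j + 1) := by ring
    · intro b _
      calc ((univ.filter fun y : G => orderOf y = 2 ^ (j + 2)).filter fun a => a ^ 2 = b).card
          ≤ (univ.filter fun a : G => (powMonoidHom 2 : G →* G) a = b).card := by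
            apply Finset.card_le_card
            intro y hy
            simp only [mem_filter, mem_univ, true_and, powMonoidHom_apply] at hy ⊢
            exact hy.2
        _ ≤ (univ.filter fun a : G => (powMonoidHom 2 : G →* G) a = 1).card :=
            fiber_card_le _ _
        _ ≤ 2 := by
            refine le_trans (Finset.card_le_card ?_) h2
            intro y hy
            simpa using hy




lemma card_ker_pow_odd_dvd {t : ℕ} (ht : Odd t) :
    Odd (univ.filter fun y : G => y ^ t = 1).card ∧
      (univ.filter fun y : G => y ^ t = 1).card ∣ Fintype.card G := by
  classical
  set H : Subgroup G := (powMonoidHom t : G →* G).ker with hH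
  have hcard : Nat.card H = (univ.filter fun y : G => y ^ t = 1).card := by
    rw [Nat.card_eq_fintype_card, Fintype.card_subtype]
    congr 1
    ext y
    simp [hH, MonoidHom.mem_ker, powMonoidHom_apply]
  constructor
  · rw [← hcard, Nat.odd_iff]
    by_contra h
    have h2 : 2 ∣ Nat.card H := by omega
    obtain ⟨y, hy⟩ := exists_prime_orderOf_dvd_card' (G := H) 2 h2
    have hyG : orderOf (y : G) = 2 := by rw [Subgroup.orderOf_coe, hy]
    have hyt : (y : G) ^ t = 1 := y.2
    have : orderOf (y : G) ∣ t := orderOf_dvd_of_pow_eq_one hyt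
    rw [hyG] at this
    rw [Nat.odd_iff] at ht
    omega
  · rw [← hcard, ← Nat.card_eq_fintype_card]
    exact Subgroup.card_subgroup_dvd_card H



-- helper: odd divisor of the group order divides the odd part
lemma odd_dvd_ord_compl {w : ℕ} (hw : Odd w) (hdvd : w ∣ Fintype.card G) :
    w ∣ (Fintype.card G / 2 ^ (Fintype.card G).factorization 2) := by
  have : w ∣ (2 ^ (Fintype.card G).factorization 2) * (Fintype.card G / 2 ^ (Fintype.card G).factorization 2) := by
    rwa [Nat.ordProj_mul_ordCompl_eq_self]
  exact (Nat.Coprime.pow_right _ (hw.coprime_two_right)).dvd_of_dvd_mul_left this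

lemma orderOf_pow_odd_part (y : G) :
    orderOf (y ^ ((Fintype.card G / 2 ^ (Fintype.card G).factorization 2))) = 2 ^ ((orderOf y).factorization 2) := by
  set t := (Fintype.card G / 2 ^ (Fintype.card G).factorization 2) with ht
  have hn0 : Fintype.card G ≠ 0 := Fintype.card_ne_zero
  have hodd : Odd t := by
    rw [Nat.odd_iff, ← Nat.two_dvd_ne_zero]
    exact Nat.not_dvd_ordCompl Nat.prime_two hn0
  have hy0 : orderOf y ≠ 0 := (orderOf_pos y).ne'
  set j := (orderOf y).factorization 2 with hj
  set w := (orderOf y / 2 ^ (orderOf y).factorization 2) with hw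
  have hwodd : Odd w := by
    rw [Nat.odd_iff, ← Nat.two_dvd_ne_zero]
    exact Nat.not_dvd_ordCompl Nat.prime_two hy0
  have hdecomp : 2 ^ j * w = orderOf y := Nat.ordProj_mul_ordCompl_eq_self _ 2
  have hword : w ∣ orderOf y := ⟨2 ^ j, by rw [← hdecomp]; ring⟩
  have hwt : w ∣ t :=
    odd_dvd_ord_compl hwodd (hword.trans orderOf_dvd_card)
  have hgcd : (orderOf y).gcd t = w := by
    apply Nat.dvd_antisymm
    · have h1 : (orderOf y).gcd t ∣ t := Nat.gcd_dvd_right _ _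
      have hgodd : Odd ((orderOf y).gcd t) := by
        rw [Nat.odd_iff, ← Nat.two_dvd_ne_zero]
        intro h2
        rw [Nat.odd_iff, ← Nat.two_dvd_ne_zero] at hodd
        exact hodd (h2.trans h1)
      have : (orderOf y).gcd t ∣ 2 ^ j * w := by
        rw [hdecomp]; exact Nat.gcd_dvd_left _ _
      exact (Nat.Coprime.pow_right _ (hgodd.coprime_two_right)).dvd_of_dvd_mul_left this
    · exact Nat.dvd_gcd hword hwt
  rw [orderOf_pow, hgcd, ← hdecomp, Nat.mul_div_cancel _ hwodd.pos]

/-- Key per-factor bound: each 2-adic level contains at most half the group. -/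
lemma count_two_level_le (h2 : (univ.filter fun y : G => y ^ 2 = 1).card ≤ 2)
    (hn : 2 ∣ Fintype.card G) (j : ℕ) :
    2 * (univ.filter fun y : G => (orderOf y).factorization 2 = j).card ≤ Fintype.card G := by
  classical
  set n := Fintype.card G with hnn
  have hn0 : n ≠ 0 := Fintype.card_ne_zero
  set s := n.factorization 2 with hs
  set t := (n / 2 ^ n.factorization 2) with htdef
  have hst : 2 ^ s * t = n := Nat.ordProj_mul_ordCompl_eq_self _ 2
  have hs1 : 1 ≤ s := Nat.Prime.factorization_pos_of_dvd Nat.prime_two hn0 hn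
  have hodd : Odd t := by
    rw [Nat.odd_iff, ← Nat.two_dvd_ne_zero]
    exact Nat.not_dvd_ordCompl Nat.prime_two hn0
  set q := (univ.filter fun y : G => y ^ t = 1).card with hq
  obtain ⟨hqodd, hqdvd⟩ := card_ker_pow_odd_dvd (G := G) hodd
  have hqt : q ≤ t := Nat.le_of_dvd hodd.pos (odd_dvd_ord_compl hqodd hqdvd)
  by_cases hjs : j ≤ s
  · rcases Nat.eq_zero_or_pos j with rfl | hj1
    · -- odd order elements lie in the kernel of (·^t)
      have hsub : (univ.filter fun y : G => (orderOf y).factorization 2 = 0) ⊆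
          univ.filter fun y : G => y ^ t = 1 := by
        intro y hy
        simp only [mem_filter, mem_univ, true_and] at hy ⊢
        have h := orderOf_pow_odd_part (G := G) y
        rw [hy, pow_zero] at h
        exact orderOf_eq_one_iff.mp h
      calc 2 * (univ.filter fun y : G => (orderOf y).factorization 2 = 0).card
          ≤ 2 * q := Nat.mul_le_mul_left _ (Finset.card_le_card hsub)
        _ ≤ 2 ^ s * t := Nat.mul_le_mul (Nat.pow_le_pow_right (by norm_num) hs1
              |>.trans_eq' (by norm_num)) hqt
        _ = n := hst
    · -- level j ≥ 1: map y ↦ y^t lands in elements of order 2^j, fibers ≤ q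
      have key := Finset.card_le_mul_card_image (f := fun y : G => y ^ t)
        (univ.filter fun y : G => (orderOf y).factorization 2 = j) q ?_
      · have himg : ((univ.filter fun y : G => (orderOf y).factorization 2 = j).image
            fun y => y ^ t) ⊆ univ.filter fun y : G => orderOf y = 2 ^ ((j - 1) + 1) := by
          intro z hz
          simp only [mem_image, mem_filter, mem_univ, true_and] at hz ⊢
          obtain ⟨y, hy, rfl⟩ := hz
          rw [orderOf_pow_odd_part, hy]
          congr 1
          omega
        have hord := card_orderOf_two_pow h2 (j - 1)
        have hcard : ((univ.filter fun y : G => (orderOf y).factorization 2 = j).image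
            fun y => y ^ t).card ≤ 2 ^ (j - 1) :=
          le_trans (Finset.card_le_card himg) hord
        have : 2 * (univ.filter fun y : G => (orderOf y).factorization 2 = j).card
            ≤ 2 * (q * 2 ^ (j - 1)) :=
          Nat.mul_le_mul_left _ (le_trans key (Nat.mul_le_mul_left _ hcard))
        refine le_trans this ?_
        have hpow : (2:ℕ) ^ j = 2 ^ (j - 1) * 2 := by
          rw [← pow_succ]; congr 1; omega
        have : 2 * (q * 2 ^ (j - 1)) = q * 2 ^ j := by rw [hpow]; ring
        rw [this, ← hst]
        exact Nat.mul_le_mul hqt (Nat.pow_le_pow_right (by norm_num) hjs) |>.trans_eq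
          (mul_comm _ _)
      · intro b _
        calc ((univ.filter fun y : G => (orderOf y).factorization 2 = j).filter
              fun a => a ^ t = b).card
            ≤ (univ.filter fun a : G => (powMonoidHom t : G →* G) a = b).card := by
              apply Finset.card_le_card
              intro y hy
              simp only [mem_filter, mem_univ, true_and, powMonoidHom_apply] at hy ⊢
              exact hy.2
          _ ≤ (univ.filter fun a : G => (powMonoidHom t : G →* G) a = 1).card :=
              fiber_card_le _ _
          _ = q := by
              rw [hq]
              congr 1
  · -- j > s: no elements at this level
    have : (univ.filter fun y : G => (orderOf y).factorization 2 = j) = ∅ := by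
      rw [Finset.filter_eq_empty_iff]
      intro y _
      intro hy
      have hdvd : orderOf y ∣ n := orderOf_dvd_card
      have hle : (orderOf y).factorization 2 ≤ s := by
        have := (Nat.factorization_le_iff_dvd (orderOf_pos y).ne' hn0).mpr hdvd
        exact Finsupp.le_def.mp this 2
      omega
    rw [this]
    simp only [Finset.card_empty, Nat.mul_zero]
    exact Nat.zero_le _

end Counting



lemma pi_bad_count {ι : Type*} [Fintype ι] [DecidableEq ι] (i₀ : ι)
    (G : ι → Type*) [∀ i, CommGroup (G i)] [∀ i, Fintype (G i)] [∀ i, DecidableEq (G i)]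
    (hhalf : ∀ i j, 2 * (univ.filter fun y : G i => (orderOf y).factorization 2 = j).card
      ≤ Fintype.card (G i)) :
    2 ^ (Fintype.card ι - 1) *
      (univ.filter fun x : ∀ i, G i =>
        ∀ i, (orderOf (x i)).factorization 2 = (orderOf (x i₀)).factorization 2).card ≤
      Fintype.card (∀ i, G i) := by
  classical
  set ν : ℕ → ℕ := fun m => m.factorization 2 with hν
  set M := Fintype.card (G i₀) + 1 with hM
  have hνlt : ∀ y : G i₀, ν (orderOf y) < M := by
    intro y
    have h1 : orderOf y ≤ Fintype.card (G i₀) := orderOf_le_card_univ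
    have h2 : ν (orderOf y) ≤ orderOf y := le_trans (Nat.le_of_lt Nat.lt_two_pow_self)
      (Nat.ordProj_le 2 (orderOf_pos y).ne')
    omega
  -- decompose the bad set as a disjoint union over the common 2-adic level
  have hdecomp : (univ.filter fun x : ∀ i, G i =>
        ∀ i, ν (orderOf (x i)) = ν (orderOf (x i₀))) =
      (Finset.range M).biUnion (fun j => Fintype.piFinset fun i =>
        univ.filter fun y : G i => ν (orderOf y) = j) := by
    ext x
    simp only [mem_filter, mem_univ, true_and, mem_biUnion, Finset.mem_range,
      Fintype.mem_piFinset]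
    constructor
    · intro h
      exact ⟨ν (orderOf (x i₀)), hνlt _, h⟩
    · rintro ⟨j, _, hj⟩ i
      rw [hj i, hj i₀]
  have hdisj : ∀ j₁ ∈ Finset.range M, ∀ j₂ ∈ Finset.range M, j₁ ≠ j₂ →
      Disjoint (Fintype.piFinset fun i => univ.filter fun y : G i => ν (orderOf y) = j₁)
        (Fintype.piFinset fun i => univ.filter fun y : G i => ν (orderOf y) = j₂) := by
    intro j₁ _ j₂ _ hne
    rw [Finset.disjoint_left]
    intro x h1 h2
    rw [Fintype.mem_piFinset] at h1 h2
    have e1 := h1 i₀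
    have e2 := h2 i₀
    simp only [mem_filter, mem_univ, true_and] at e1 e2
    exact hne (e1 ▸ e2 ▸ rfl)
  rw [hdecomp, Finset.card_biUnion hdisj, Finset.mul_sum]
  -- bound each level
  have hlevel : ∀ j, 2 ^ (Fintype.card ι - 1) *
      (Fintype.piFinset fun i => univ.filter fun y : G i => ν (orderOf y) = j).card ≤
      (univ.filter fun y : G i₀ => ν (orderOf y) = j).card *
        ∏ i ∈ univ.erase i₀, Fintype.card (G i) := by
    intro j
    rw [Fintype.card_piFinset]
    rw [← Finset.mul_prod_erase univ _ (mem_univ i₀)]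
    have hcount : 2 ^ (Fintype.card ι - 1) = ∏ i ∈ univ.erase i₀, 2 := by
      rw [Finset.prod_const]
      congr 1
      rw [Finset.card_erase_of_mem (mem_univ i₀), Finset.card_univ]
    rw [hcount]
    calc (∏ i ∈ univ.erase i₀, 2) *
          ((univ.filter fun y : G i₀ => ν (orderOf y) = j).card *
            ∏ i ∈ univ.erase i₀, (univ.filter fun y : G i => ν (orderOf y) = j).card)
        = (univ.filter fun y : G i₀ => ν (orderOf y) = j).card *
            ∏ i ∈ univ.erase i₀, 2 * (univ.filter fun y : G i => ν (orderOf y) = j).card := by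
          rw [Finset.prod_mul_distrib]; ring
      _ ≤ (univ.filter fun y : G i₀ => ν (orderOf y) = j).card *
            ∏ i ∈ univ.erase i₀, Fintype.card (G i) := by
          apply Nat.mul_le_mul_left
          apply Finset.prod_le_prod'
          intro i _
          exact hhalf i j
  calc ∑ j ∈ Finset.range M, 2 ^ (Fintype.card ι - 1) *
        (Fintype.piFinset fun i => univ.filter fun y : G i => ν (orderOf y) = j).card
      ≤ ∑ j ∈ Finset.range M, (univ.filter fun y : G i₀ => ν (orderOf y) = j).card *
          ∏ i ∈ univ.erase i₀, Fintype.card (G i) :=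
        Finset.sum_le_sum fun j _ => hlevel j
    _ = (∑ j ∈ Finset.range M, (univ.filter fun y : G i₀ => ν (orderOf y) = j).card) *
          ∏ i ∈ univ.erase i₀, Fintype.card (G i) := by rw [Finset.sum_mul]
    _ = Fintype.card (G i₀) * ∏ i ∈ univ.erase i₀, Fintype.card (G i) := by
        congr 1
        rw [← Finset.card_univ]
        exact (Finset.card_eq_sum_card_fiberwise (fun y _ =>
          Finset.mem_range.mpr (hνlt y))).symm
    _ = Fintype.card (∀ i, G i) := by
        rw [Fintype.card_pi, ← Finset.mul_prod_erase univ _ (mem_univ i₀)]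



lemma zmod_sq_eq_one {p : ℕ} (hp : p.Prime) (hp2 : p ≠ 2) {α : ℕ} (hα : 0 < α)
    (z : ZMod (p ^ α)) (h : z ^ 2 = 1) : z = 1 ∨ z = -1 := by
  haveI : NeZero (p ^ α) := ⟨pow_ne_zero _ hp.ne_zero⟩
  have hpI : Prime (p : ℤ) := Nat.prime_iff_prime_int.mp hp
  set a : ℤ := (z.val : ℤ) with ha
  have hz : ((a : ℤ) : ZMod (p ^ α)) = z := by
    simp [ha, ZMod.natCast_val, ZMod.cast_id]
  have hdvd : ((p : ℤ) ^ α) ∣ (a - 1) * (a + 1) := by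
    have : (((p ^ α : ℕ) : ℤ)) ∣ (a - 1) * (a + 1) := by
      rw [← ZMod.intCast_zmod_eq_zero_iff_dvd]
      push_cast
      rw [hz]
      linear_combination h
    exact_mod_cast this
  by_cases hc : (p : ℤ) ∣ a - 1
  · -- then p does not divide a + 1
    have hnc : ¬ (p : ℤ) ∣ a + 1 := by
      intro hc'
      have : (p : ℤ) ∣ 2 := by
        have := dvd_sub hc' hc
        simpa using this
      have h2 := Int.le_of_dvd (by norm_num) this
      have hp3 : 3 ≤ p := by have := hp.two_le; omega
      omega
    left
    have hcop : IsCoprime ((p : ℤ) ^ α) (a + 1) :=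
      (IsCoprime.pow_left ((hpI.coprime_iff_not_dvd).mpr hnc))
    have : ((p : ℤ) ^ α) ∣ a - 1 := hcop.dvd_of_dvd_mul_right hdvd
    have h0 : ((a - 1 : ℤ) : ZMod (p ^ α)) = 0 := by
      rw [ZMod.intCast_zmod_eq_zero_iff_dvd]
      push_cast
      exact this
    push_cast at h0
    rw [hz] at h0
    linear_combination h0
  · right
    have hcop : IsCoprime ((p : ℤ) ^ α) (a - 1) :=
      (IsCoprime.pow_left ((hpI.coprime_iff_not_dvd).mpr hc))
    have : ((p : ℤ) ^ α) ∣ a + 1 := hcop.dvd_of_dvd_mul_left hdvd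
    have h0 : ((a + 1 : ℤ) : ZMod (p ^ α)) = 0 := by
      rw [ZMod.intCast_zmod_eq_zero_iff_dvd]
      push_cast
      exact this
    push_cast at h0
    rw [hz] at h0
    linear_combination h0

lemma units_sq_filter_card {p : ℕ} (hp : p.Prime) (hp2 : p ≠ 2) {α : ℕ} (hα : 0 < α) :
    haveI : Fact (p.Prime) := ⟨hp⟩
    (univ.filter fun y : (ZMod (p ^ α))ˣ => y ^ 2 = 1).card ≤ 2 := by
  haveI : Fact (p.Prime) := ⟨hp⟩
  haveI : NeZero (p ^ α) := ⟨pow_ne_zero _ hp.ne_zero⟩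
  classical
  have hsub : (univ.filter fun y : (ZMod (p ^ α))ˣ => y ^ 2 = 1) ⊆ {1, -1} := by
    intro y hy
    simp only [mem_filter, mem_univ, true_and] at hy
    have : ((y : ZMod (p ^ α))) ^ 2 = 1 := by
      rw [← Units.val_pow_eq_pow_val, hy, Units.val_one]
    rcases zmod_sq_eq_one hp hp2 hα _ this with h | h
    · simp only [Finset.mem_insert, Finset.mem_singleton]
      left
      exact Units.ext h
    · simp only [Finset.mem_insert, Finset.mem_singleton]
      right
      exact Units.ext (by rw [h, Units.val_neg, Units.val_one])
  exact le_trans (Finset.card_le_card hsub) (le_trans (Finset.card_insert_le _ _) (by simp))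



/-- units of a product are the product of the units -/
def piUnits {ι : Type*} {M : ι → Type*} [∀ i, Monoid (M i)] :
    (∀ i, M i)ˣ ≃* ∀ i, (M i)ˣ where
  toFun u i := ⟨u.val i, u.inv i, congrFun u.val_inv i, congrFun u.inv_val i⟩
  invFun f := ⟨fun i => (f i).val, fun i => (f i).inv,
    funext fun i => (f i).val_inv, funext fun i => (f i).inv_val⟩
  left_inv u := rfl
  right_inv f := rfl
  map_mul' u v := rfl

@[simp] lemma piUnits_apply_val {ι : Type*} {M : ι → Type*} [∀ i, Monoid (M i)]
    (u : (∀ i, M i)ˣ) (i : ι) : ((piUnits u i : (M i)ˣ) : M i) = (u : ∀ i, M i) i := rfl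

lemma dvd_div_two_of_lt_factorization {a b : ℕ} (ha : a ≠ 0) (hb : b ≠ 0) (hab : a ∣ b)
    (h : a.factorization 2 < b.factorization 2) : a ∣ b / 2 := by
  have h2 : 2 ∣ b := Nat.dvd_of_factorization_pos (by omega)
  rw [Nat.dvd_div_iff_mul_dvd h2]
  rw [← Nat.factorization_le_iff_dvd (by omega) hb]
  rw [Nat.factorization_mul (by norm_num) ha]
  rw [Finsupp.le_def]
  intro p
  have hble := (Nat.factorization_le_iff_dvd ha hb).mpr hab
  rw [Finsupp.le_def] at hble
  by_cases hp : p = 2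
  · subst hp
    have : Nat.factorization 2 2 = 1 := Nat.Prime.factorization_self Nat.prime_two
    simp only [Finsupp.add_apply, this]
    have := hble 2
    omega
  · have : Nat.factorization 2 p = 0 := by
      rw [Nat.Prime.factorization Nat.prime_two]
      simp [Finsupp.single_apply, Ne.symm hp]
    simp only [Finsupp.add_apply, this, zero_add]
    exact hble p


/-- For odd `N > 1` with `k` distinct prime factors, the proportion of units
`x` modulo `N` whose multiplicative order `r` is even and satisfies
`x^(r/2) ≢ -1 (mod N)` is at least `1 - 1/2^(k-1)`. -/
theorem shor_good_x_probability (N : ℕ) (hN : 1 < N) (hodd : Odd N) :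
    (1 : ℝ) - 1 / 2 ^ (N.primeFactors.card - 1) ≤
      ({x : (ZMod N)ˣ | 2 ∣ orderOf x ∧
          (x : ZMod N) ^ (orderOf x / 2) ≠ -1}.ncard : ℝ) /
        (Nat.card (ZMod N)ˣ : ℝ) := by
  classical
  haveI : NeZero N := ⟨by omega⟩
  set ι := {p : ℕ // p ∈ N.primeFactors} with hι
  have hNfk : N.primeFactors.Nonempty := Nat.nonempty_primeFactors.mpr hN
  haveI : Nonempty ι := ⟨⟨hNfk.choose, hNfk.choose_spec⟩⟩
  set i₀ : ι := Classical.arbitrary ι with hi₀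
  set a : ι → ℕ := fun i => (i : ℕ) ^ N.factorization i with ha
  -- basic facts about each prime power factor
  have hprime : ∀ i : ι, (i : ℕ).Prime := fun i => Nat.prime_of_mem_primeFactors i.2
  have hpne2 : ∀ i : ι, (i : ℕ) ≠ 2 := by
    intro i h2
    have := Nat.dvd_of_mem_primeFactors i.2
    rw [h2] at this
    rw [Nat.odd_iff] at hodd
    omega
  have hαpos : ∀ i : ι, 0 < N.factorization (i : ℕ) := fun i =>
    Nat.Prime.factorization_pos_of_dvd (hprime i) (by omega) (Nat.dvd_of_mem_primeFactors i.2)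
  have ha2 : ∀ i : ι, 2 < a i := by
    intro i
    have h3 : 3 ≤ (i : ℕ) := by have := (hprime i).two_le; have := hpne2 i; omega
    calc 2 < (i : ℕ) := by omega
      _ ≤ a i := Nat.le_self_pow (hαpos i).ne' _
  haveI : ∀ i : ι, NeZero (a i) := fun i => ⟨by have := ha2 i; omega⟩
  haveI : ∀ i : ι, Fact (2 < a i) := fun i => ⟨ha2 i⟩
  -- the CRT isomorphism
  have hprodN : ∏ i : ι, a i = N := by
    have h1 : ∏ i : ι, a i = ∏ p ∈ N.primeFactors, p ^ N.factorization p :=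
      Finset.prod_coe_sort N.primeFactors (fun p => p ^ N.factorization p)
    rw [h1]
    conv_rhs => rw [← Nat.factorization_prod_pow_eq_self (by omega : N ≠ 0)]
    rw [Finsupp.prod, Nat.support_factorization]
  have hcop : Pairwise (Function.onFun Nat.Coprime a) := by
    intro i j hij
    exact Nat.Coprime.pow _ _
      ((Nat.coprime_primes (hprime i) (hprime j)).mpr (fun h => hij (Subtype.ext h)))
  set E0 : ZMod N ≃+* ∀ i, ZMod (a i) :=
    (ZMod.ringEquivCongr hprodN.symm).trans (ZMod.prodEquivPi a hcop) with hE0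
  set E : (ZMod N)ˣ ≃* ∀ i, (ZMod (a i))ˣ :=
    (Units.mapEquiv E0.toMulEquiv).trans piUnits with hE
  have hEval : ∀ (x : (ZMod N)ˣ) (i : ι), ((E x i : (ZMod (a i))ˣ) : ZMod (a i))
      = E0 (x : ZMod N) i := fun x i => rfl
  have hEord : ∀ x : (ZMod N)ˣ, orderOf (E x) = orderOf x := fun x =>
    orderOf_injective E.toMonoidHom (MulEquiv.injective E) x
  have hEneg : ∀ i : ι, E (-1) i = -1 := by
    intro i
    apply Units.ext
    rw [hEval, Units.val_neg, Units.val_one, map_neg, map_one, Units.val_neg, Units.val_one]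
    simp
  -- coordinate orders divide the global order
  have hcoorddvd : ∀ (x : (ZMod N)ˣ) (i : ι), orderOf (E x i) ∣ orderOf x := by
    intro x i
    have := orderOf_map_dvd (Pi.evalMonoidHom (fun i : ι => (ZMod (a i))ˣ) i) (E x)
    rw [hEord] at this
    exact this
  -- the bad set
  set B : Finset (ZMod N)ˣ := univ.filter fun x =>
    ¬(2 ∣ orderOf x ∧ (x : ZMod N) ^ (orderOf x / 2) ≠ -1) with hB
  have hBmem : ∀ x ∈ B, ∀ i : ι,
      (orderOf (E x i)).factorization 2 = (orderOf x).factorization 2 := by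
    intro x hx i
    rw [hB, mem_filter] at hx
    have hx' := hx.2
    have hr0 : orderOf x ≠ 0 := (orderOf_pos x).ne'
    have hri0 : orderOf (E x i) ≠ 0 := (orderOf_pos (E x i)).ne'
    by_cases h2r : 2 ∣ orderOf x
    · -- then x^(r/2) = -1
      have hxhalf : (x : ZMod N) ^ (orderOf x / 2) = -1 := by
        by_contra hne
        exact hx' ⟨h2r, hne⟩
      have hxu : x ^ (orderOf x / 2) = (-1 : (ZMod N)ˣ) := by
        apply Units.ext
        rw [Units.val_pow_eq_pow_val, Units.val_neg, Units.val_one]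
        exact hxhalf
      have hcoord : (E x i) ^ (orderOf x / 2) = -1 := by
        have := congrArg (fun y => E y i) hxu
        simp only [map_pow, Pi.pow_apply] at this
        rw [this, hEneg]
      have hcoordne : (E x i) ^ (orderOf x / 2) ≠ 1 := by
        rw [hcoord]
        intro h1
        have := congrArg (Units.val) h1
        rw [Units.val_neg, Units.val_one] at this
        exact ZMod.neg_one_ne_one this
      have hnotdvd : ¬ orderOf (E x i) ∣ orderOf x / 2 := by
        intro hdvd
        exact hcoordne (orderOf_dvd_iff_pow_eq_one.mp hdvd)
      by_contra hne
      have hle : (orderOf (E x i)).factorization 2 ≤ (orderOf x).factorization 2 :=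
        Finsupp.le_def.mp ((Nat.factorization_le_iff_dvd hri0 hr0).mpr (hcoorddvd x i)) 2
      exact hnotdvd (dvd_div_two_of_lt_factorization hri0 hr0 (hcoorddvd x i) (by omega))
    · -- odd order case: both valuations are zero
      have h1 : (orderOf x).factorization 2 = 0 := Nat.factorization_eq_zero_of_not_dvd h2r
      have h2 : (orderOf (E x i)).factorization 2 = 0 :=
        Nat.factorization_eq_zero_of_not_dvd (fun hdvd => h2r (hdvd.trans (hcoorddvd x i)))
      rw [h1, h2]
  -- counting
  have hhalf : ∀ (i : ι) (j : ℕ),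
      2 * (univ.filter fun y : (ZMod (a i))ˣ => (orderOf y).factorization 2 = j).card
        ≤ Fintype.card (ZMod (a i))ˣ := by
    intro i j
    apply count_two_level_le
    · exact units_sq_filter_card (hprime i) (hpne2 i) (hαpos i)
    · rw [ZMod.card_units_eq_totient]
      exact (Nat.totient_even (ha2 i)).two_dvd
  have hpibound := pi_bad_count i₀ (fun i : ι => (ZMod (a i))ˣ) hhalf
  -- transfer the bound to B
  have hBsub : B.card ≤ (univ.filter fun x : ∀ i : ι, (ZMod (a i))ˣ =>
      ∀ i, (orderOf (x i)).factorization 2 = (orderOf (x i₀)).factorization 2).card := by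
    apply Finset.card_le_card_of_injOn E
    · intro x hx
      have hgoal : ∀ i : ι, (orderOf (E x i)).factorization 2
          = (orderOf (E x i₀)).factorization 2 := by
        intro i
        rw [hBmem x hx i, hBmem x hx i₀]
      simpa using hgoal
    · exact fun x _ y _ h => MulEquiv.injective E h
  have hcardeq : Fintype.card (∀ i : ι, (ZMod (a i))ˣ) = Fintype.card (ZMod N)ˣ :=
    (Fintype.card_congr E.toEquiv).symm
  have hkι : Fintype.card ι = N.primeFactors.card := Fintype.card_coe _
  set n := Fintype.card (ZMod N)ˣ with hn
  have hmain : 2 ^ (N.primeFactors.card - 1) * B.card ≤ n := by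
    rw [← hkι]
    exact le_trans (Nat.mul_le_mul_left _ hBsub) (le_trans hpibound (le_of_eq hcardeq))
  -- relate the good set to the complement of B
  set S := {x : (ZMod N)ˣ | 2 ∣ orderOf x ∧ (x : ZMod N) ^ (orderOf x / 2) ≠ -1} with hS
  have hSncard : S.ncard = (univ.filter fun x : (ZMod N)ˣ =>
      2 ∣ orderOf x ∧ (x : ZMod N) ^ (orderOf x / 2) ≠ -1).card := by
    rw [hS]
    rw [← Set.ncard_coe_finset]
    congr 1
    ext x
    simp
  have hsplit : (univ.filter fun x : (ZMod N)ˣ =>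
      2 ∣ orderOf x ∧ (x : ZMod N) ^ (orderOf x / 2) ≠ -1).card + B.card = n := by
    rw [hB, hn]
    rw [← Finset.card_univ]
    exact Finset.card_filter_add_card_filter_not _
  -- final real arithmetic
  have hn0 : 0 < n := Fintype.card_pos
  rw [Nat.card_eq_fintype_card, ← hn, hSncard]
  rw [le_div_iff₀ (by exact_mod_cast hn0)]
  have h2pow : (0 : ℝ) < 2 ^ (N.primeFactors.card - 1) := by positivity
  have hc1 : ((univ.filter fun x : (ZMod N)ˣ =>
      2 ∣ orderOf x ∧ (x : ZMod N) ^ (orderOf x / 2) ≠ -1).card : ℝ) + B.card = n := by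
    exact_mod_cast hsplit
  have hc2 : (2 : ℝ) ^ (N.primeFactors.card - 1) * B.card ≤ n := by
    exact_mod_cast hmain
  have hBn : (B.card : ℝ) * 2 ^ (N.primeFactors.card - 1) ≤ n := by linarith [hc2]
  rw [sub_mul, one_mul, div_mul_eq_mul_div, one_mul]
  rw [sub_le_iff_le_add]
  have : (n : ℝ) / 2 ^ (N.primeFactors.card - 1) ≥ B.card := by
    rw [ge_iff_le, le_div_iff₀ h2pow]
    exact hBn
  linarith

end
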